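/- Let A₁ and A₂ be standard operator algebras on complex Banach spaces X₁ and X₂ of dimension at least two, let r, s be nonnegative integers with r + s ≥ 1, and let Φ : A₁ → A₂ be a map whose range contains all operators of rank at most two and which satisfies σ_π(B^r A B^s) = σ_π(Φ(B)^r Φ(A) Φ(B)^s) for all A, B ∈ A₁. Then Φ preserves rank-one operators in both directions: for every A ∈ A₁, A has rank one if and only if Φ(A) has rank one. -/

import Mathlib

open scoped ENNReal

/-- The peripheral spectrum of a bounded linear operator on a complex Banach space:
the set of spectral values of maximal modulus. -/
noncomputable def periSpec {X : Type*} [NormedAddCommGroup X] [NormedSpace ℂ X]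
    (T : X →L[ℂ] X) : Set ℂ :=
  {z | z ∈ spectrum ℂ T ∧ (‖z‖₊ : ℝ≥0∞) = spectralRadius ℂ T}


section Aux

variable {X : Type*} [NormedAddCommGroup X] [NormedSpace ℂ X]


-- eigen -> spectrum
lemma eig_mem_spectrum {T : X →L[ℂ] X} {w : X} {c : ℂ} (hw : w ≠ 0) (h : T w = c • w) :
    c ∈ spectrum ℂ T := by
  rw [spectrum.mem_iff]
  intro hu
  have h0 : (algebraMap ℂ (X →L[ℂ] X) c - T) w = 0 := by
    simp [Algebra.algebraMap_eq_smul_one, h, ContinuousLinearMap.sub_apply,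
      ContinuousLinearMap.smul_apply, ContinuousLinearMap.one_apply]
  have key : hu.unit.inv * (algebraMap ℂ (X →L[ℂ] X) c - T) = 1 := hu.unit.inv_mul
  apply hw
  calc w = (hu.unit.inv * (algebraMap ℂ (X →L[ℂ] X) c - T)) w := by rw [key]; rfl
  _ = hu.unit.inv ((algebraMap ℂ (X →L[ℂ] X) c - T) w) := rfl
  _ = 0 := by rw [h0]; simp

-- dual functionals with prescribed values on independent vectors
lemma exists_clm_of_li {n : ℕ} {v : Fin n → X} (hv : LinearIndependent ℂ v) (c : Fin n → ℂ) :
    ∃ f : X →L[ℂ] ℂ, ∀ i, f (v i) = c i := by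
  set V := Submodule.span ℂ (Set.range v)
  haveI : FiniteDimensional ℂ V := FiniteDimensional.span_of_finite ℂ (Set.finite_range v)
  let b : Module.Basis (Fin n) ℂ V := Module.Basis.span hv
  let ℓ : V →ₗ[ℂ] ℂ := b.constr ℂ c
  let ℓ' : V →L[ℂ] ℂ := LinearMap.toContinuousLinearMap ℓ
  obtain ⟨g, hg, -⟩ := exists_extension_norm_eq V ℓ'
  refine ⟨g, fun i => ?_⟩
  have hmem : v i ∈ V := Submodule.subset_span ⟨i, rfl⟩
  have h1 : (⟨v i, hmem⟩ : V) = b i := by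
    apply Subtype.ext
    simp [b, Module.Basis.span_apply hv i]
  have := hg ⟨v i, hmem⟩
  rw [this, h1]
  show ℓ (b i) = c i
  simp [ℓ, Module.Basis.constr_basis]

/-- Explicit resolvent for an operator of the form `y₁ ⊗ g₁ + y₂ ⊗ g₂`. -/
lemma spec2 (y₁ y₂ : X) (g₁ g₂ : X →L[ℂ] ℂ) {z : ℂ} (hz : z ≠ 0)
    (hδ : (g₁ y₁ - z) * (g₂ y₂ - z) - g₁ y₂ * g₂ y₁ ≠ 0) :
    z ∉ spectrum ℂ (g₁.smulRight y₁ + g₂.smulRight y₂) := by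
  set Q : X →L[ℂ] X := g₁.smulRight y₁ + g₂.smulRight y₂ with hQ
  set δ : ℂ := (g₁ y₁ - z) * (g₂ y₂ - z) - g₁ y₂ * g₂ y₁ with hδdef
  set h₁ : X →L[ℂ] ℂ := δ⁻¹ • ((z - g₂ y₂) • g₁ + (g₁ y₂) • g₂) with hh₁
  set h₂ : X →L[ℂ] ℂ := δ⁻¹ • ((g₂ y₁) • g₁ + (z - g₁ y₁) • g₂) with hh₂
  set R : X →L[ℂ] X := z⁻¹ • (1 + h₁.smulRight y₁ + h₂.smulRight y₂) with hR
  have hQapp : ∀ v, Q v = g₁ v • y₁ + g₂ v • y₂ := by intro v; simp [hQ]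
  have hRapp : ∀ v, R v = z⁻¹ • (v + h₁ v • y₁ + h₂ v • y₂) := by intro v; simp [hR]
  have h₁app : ∀ v, h₁ v = δ⁻¹ * ((z - g₂ y₂) * g₁ v + g₁ y₂ * g₂ v) := by intro v; simp [hh₁]; ring
  have h₂app : ∀ v, h₂ v = δ⁻¹ * (g₂ y₁ * g₁ v + (z - g₁ y₁) * g₂ v) := by intro v; simp [hh₂]; ring
  rw [spectrum.notMem_iff]
  have e1 : (algebraMap ℂ (X →L[ℂ] X) z - Q) * R = 1 := by
    ext v
    have : (algebraMap ℂ (X →L[ℂ] X) z - Q) (R v) = z • R v - Q (R v) := by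
      simp [Algebra.algebraMap_eq_smul_one, ContinuousLinearMap.sub_apply]
    show (algebraMap ℂ (X →L[ℂ] X) z - Q) (R v) = v
    rw [this, hRapp, hQapp]
    have hg₁ : g₁ (z⁻¹ • (v + h₁ v • y₁ + h₂ v • y₂))
        = z⁻¹ * (g₁ v + h₁ v * g₁ y₁ + h₂ v * g₁ y₂) := by simp [mul_add, mul_comm]
    have hg₂ : g₂ (z⁻¹ • (v + h₁ v • y₁ + h₂ v • y₂))
        = z⁻¹ * (g₂ v + h₁ v * g₂ y₁ + h₂ v * g₂ y₂) := by simp [mul_add, mul_comm]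
    rw [hg₁, hg₂, smul_smul, mul_inv_cancel₀ hz, one_smul]
    have c₁ : z⁻¹ * (g₁ v + h₁ v * g₁ y₁ + h₂ v * g₁ y₂) = h₁ v := by
      rw [h₁app, h₂app]; field_simp; ring
    have c₂ : z⁻¹ * (g₂ v + h₁ v * g₂ y₁ + h₂ v * g₂ y₂) = h₂ v := by
      rw [h₁app, h₂app]; field_simp; ring
    rw [c₁, c₂]; module
  have e2 : R * (algebraMap ℂ (X →L[ℂ] X) z - Q) = 1 := by
    ext v
    show R ((algebraMap ℂ (X →L[ℂ] X) z - Q) v) = v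
    have : (algebraMap ℂ (X →L[ℂ] X) z - Q) v = z • v - Q v := by
      simp [Algebra.algebraMap_eq_smul_one, ContinuousLinearMap.sub_apply]
    rw [this, hQapp]
    rw [hRapp]
    have hw₁ : h₁ (z • v - (g₁ v • y₁ + g₂ v • y₂))
        = z * h₁ v - (g₁ v * h₁ y₁ + g₂ v * h₁ y₂) := by
      simp [mul_comm]
    have hw₂ : h₂ (z • v - (g₁ v • y₁ + g₂ v • y₂))
        = z * h₂ v - (g₁ v * h₂ y₁ + g₂ v * h₂ y₂) := by
      simp [mul_comm]
    rw [hw₁, hw₂]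
    have c₁ : z • v - (g₁ v • y₁ + g₂ v • y₂)
        + (z * h₁ v - (g₁ v * h₁ y₁ + g₂ v * h₁ y₂)) • y₁
        + (z * h₂ v - (g₁ v * h₂ y₁ + g₂ v * h₂ y₂)) • y₂ = z • v := by
      have k₁ : z * h₁ v - (g₁ v * h₁ y₁ + g₂ v * h₁ y₂) - g₁ v = 0 := by
        rw [h₁app, h₁app, h₁app]; field_simp; ring
      have k₂ : z * h₂ v - (g₁ v * h₂ y₁ + g₂ v * h₂ y₂) - g₂ v = 0 := by
        rw [h₂app, h₂app, h₂app]; field_simp; ring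
      have k₁' : z * h₁ v - (g₁ v * h₁ y₁ + g₂ v * h₁ y₂) = g₁ v := by linear_combination k₁
      have k₂' : z * h₂ v - (g₁ v * h₂ y₁ + g₂ v * h₂ y₂) = g₂ v := by linear_combination k₂
      rw [k₁', k₂']; module
    rw [c₁, smul_smul, inv_mul_cancel₀ hz, one_smul]
  exact ⟨⟨algebraMap ℂ (X →L[ℂ] X) z - Q, R, e1, e2⟩, rfl⟩

lemma spec1 (y : X) (g : X →L[ℂ] ℂ) : spectrum ℂ (g.smulRight y) ⊆ {0, g y} := by
  intro z hzmem
  by_contra hne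
  simp only [Set.mem_insert_iff, Set.mem_singleton_iff, not_or] at hne
  obtain ⟨hz0, hzc⟩ := hne
  have heq : g.smulRight y + (0 : X →L[ℂ] ℂ).smulRight (0 : X) = g.smulRight y := by
    ext v; simp
  have := spec2 y (0 : X) g (0 : X →L[ℂ] ℂ) hz0 (by
    simp only [ContinuousLinearMap.zero_apply, map_zero]
    intro h
    have h' : (g y - z) * (0 - z) = 0 := by linear_combination h
    rcases mul_eq_zero.mp h' with h'' | h''
    · exact hzc (by linear_combination -h'')
    · exact hz0 (by linear_combination -h''))
  rw [heq] at this
  exact this hzmem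

lemma spec_zero : spectrum ℂ (0 : X →L[ℂ] X) ⊆ {0} := by
  have h := spec1 (0 : X) (0 : X →L[ℂ] ℂ)
  have h0 : ((0 : X →L[ℂ] ℂ).smulRight (0 : X)) = (0 : X →L[ℂ] X) := by ext v; simp
  rw [h0] at h
  intro z hz
  rcases h hz with h | h
  · exact h
  · simp only [Set.mem_singleton_iff, ContinuousLinearMap.zero_apply] at h
    simp [h]

lemma radius_eq {T : X →L[ℂ] X} {F : Set ℂ} {c : ℂ} (hsub : spectrum ℂ T ⊆ F)
    (hbd : ∀ w ∈ F, ‖w‖₊ ≤ ‖c‖₊) (hc : c ∈ spectrum ℂ T) :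
    spectralRadius ℂ T = (‖c‖₊ : ℝ≥0∞) := by
  apply le_antisymm
  · refine iSup₂_le fun k hk => ?_
    exact_mod_cast ENNReal.coe_le_coe.mpr (hbd k (hsub hk))
  · exact le_iSup₂ (f := fun k (_ : k ∈ spectrum ℂ T) => (‖k‖₊ : ℝ≥0∞)) c hc

lemma mem_periSpec {T : X →L[ℂ] X} {F : Set ℂ} {c : ℂ} (hsub : spectrum ℂ T ⊆ F)
    (hbd : ∀ w ∈ F, ‖w‖₊ ≤ ‖c‖₊) (hc : c ∈ spectrum ℂ T) : c ∈ periSpec T :=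
  ⟨hc, (radius_eq hsub hbd hc).symm⟩

lemma periSpec_subsingleton {T : X →L[ℂ] X} {c : ℂ} (hsub : spectrum ℂ T ⊆ {0, c}) :
    (periSpec T).Subsingleton := by
  intro z hz w hw
  obtain ⟨hzs, hzr⟩ := hz
  obtain ⟨hws, hwr⟩ := hw
  have hnorm : ‖z‖₊ = ‖w‖₊ := by
    have := hzr.trans hwr.symm
    exact_mod_cast this
  rcases hsub hzs with hz' | hz' <;> rcases hsub hws with hw' | hw' <;>
    (try simp only [Set.mem_singleton_iff] at *)
  · rw [hz', hw']
  · rw [hz'] at hnorm; have hw0 : w = 0 := by simpa using hnorm.symm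
    rw [hz', hw0]
  · rw [hw'] at hnorm; have hz0 : z = 0 := by simpa using hnorm
    rw [hw', hz0]
  · rw [hz', hw']

lemma rank_le_of_range_le_span {T : X →L[ℂ] X} {s : Set X}
    (h : ∀ v, T v ∈ Submodule.span ℂ s) :
    LinearMap.rank (T : X →ₗ[ℂ] X) ≤ Cardinal.mk s := by
  have hle : LinearMap.range (T : X →ₗ[ℂ] X) ≤ Submodule.span ℂ s := by
    rintro _ ⟨v, rfl⟩; exact h v
  calc LinearMap.rank (T : X →ₗ[ℂ] X) ≤ Module.rank ℂ (Submodule.span ℂ s) :=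
        Submodule.rank_mono hle
  _ ≤ Cardinal.mk s := rank_span_le s

lemma rank_smulRight_le_one (g : X →L[ℂ] ℂ) (y : X) :
    LinearMap.rank ((g.smulRight y : X →L[ℂ] X) : X →ₗ[ℂ] X) ≤ 1 := by
  have := rank_le_of_range_le_span (T := g.smulRight y) (s := {y})
    (fun v => by simpa using Submodule.smul_mem _ (g v) (Submodule.mem_span_singleton_self y))
  simpa using this

lemma rank_sum_smulRight_le_two (g₁ g₂ : X →L[ℂ] ℂ) (y₁ y₂ : X) :
    LinearMap.rank ((g₁.smulRight y₁ + g₂.smulRight y₂ : X →L[ℂ] X) : X →ₗ[ℂ] X) ≤ 2 := by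
  have h := rank_le_of_range_le_span (T := g₁.smulRight y₁ + g₂.smulRight y₂) (s := {y₁, y₂})
    (fun v => by
      have h1 : y₁ ∈ Submodule.span ℂ ({y₁, y₂} : Set X) :=
        Submodule.subset_span (by simp)
      have h2 : y₂ ∈ Submodule.span ℂ ({y₁, y₂} : Set X) :=
        Submodule.subset_span (by simp)
      simp only [ContinuousLinearMap.add_apply, ContinuousLinearMap.smulRight_apply]
      exact Submodule.add_mem _ (Submodule.smul_mem _ _ h1) (Submodule.smul_mem _ _ h2))
  refine h.trans ?_
  refine (Cardinal.mk_insert_le).trans ?_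
  simp [one_add_one_eq_two]

lemma rank_le_one_rep {T : X →L[ℂ] X}
    (h : LinearMap.rank (T : X →ₗ[ℂ] X) ≤ 1) : ∃ (g : X →L[ℂ] ℂ) (y : X), T = g.smulRight y := by
  by_cases hT : T = 0
  · exact ⟨0, 0, by ext v; simp [hT]⟩
  · have : ∃ u, T u ≠ 0 := by
      by_contra hc; push_neg at hc; exact hT (by ext v; simp [hc])
    obtain ⟨u, hu⟩ := this
    set x := T u with hx
    -- every T v lies in span {x}
    have hmem : ∀ v, T v ∈ Submodule.span ℂ ({x} : Set X) := by
      intro v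
      by_contra hv
      have hli : LinearIndependent ℂ ![T v, x] := by
        rw [linearIndependent_fin2]
        constructor
        · exact hu
        · intro a ha
          simp only [Matrix.cons_val_one, Matrix.head_cons, Matrix.cons_val_zero] at ha
          exact hv (by rw [← ha]; exact Submodule.smul_mem _ _ (Submodule.mem_span_singleton_self x))
      have hli' : LinearIndependent ℂ (fun i : Fin 2 =>
          (⟨![T v, x] i, by fin_cases i <;> simp [hx] <;> exact ⟨_, rfl⟩⟩ :
            LinearMap.range (T : X →ₗ[ℂ] X))) := by
        apply LinearIndependent.of_comp (LinearMap.range (T : X →ₗ[ℂ] X)).subtype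
        convert hli
        rfl
      have h2 : (2 : Cardinal) ≤ LinearMap.rank (T : X →ₗ[ℂ] X) := by
        have hl := hli'.cardinal_lift_le_rank
        simp only [Cardinal.mk_fin, Nat.cast_ofNat, Cardinal.lift_ofNat,
          Cardinal.lift_uzero] at hl
        exact_mod_cast hl
      have := h2.trans h
      norm_num at this
    obtain ⟨ψ, hψ⟩ := exists_clm_of_li (n := 1) (v := ![x])
      (by
        apply LinearIndependent.of_subsingleton 0
        simpa using hu) ![1]
    refine ⟨ψ.comp T, x, ?_⟩
    ext v
    obtain ⟨c, hc⟩ := Submodule.mem_span_singleton.mp (hmem v)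
    have hψx : ψ x = 1 := by simpa using hψ 0
    simp only [ContinuousLinearMap.smulRight_apply, ContinuousLinearMap.coe_comp',
      Function.comp_apply]
    rw [← hc, map_smul, hψx]
    simp

lemma rank_sandwich_le (A B : X →L[ℂ] X) (r s : ℕ) :
    LinearMap.rank ((B ^ r * A * B ^ s : X →L[ℂ] X) : X →ₗ[ℂ] X)
      ≤ LinearMap.rank (A : X →ₗ[ℂ] X) := by
  have hco : ((B ^ r * A * B ^ s : X →L[ℂ] X) : X →ₗ[ℂ] X)
      = ((B ^ r : X →L[ℂ] X) : X →ₗ[ℂ] X).comp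
          (((A : X →ₗ[ℂ] X)).comp ((B ^ s : X →L[ℂ] X) : X →ₗ[ℂ] X)) := by
    ext v; simp [ContinuousLinearMap.mul_apply]
  rw [hco]
  exact (LinearMap.rank_comp_le_right _ _).trans (LinearMap.rank_comp_le_left _ _)

lemma periSpec_subsingleton_of_rank_le_one {T : X →L[ℂ] X}
    (h : LinearMap.rank (T : X →ₗ[ℂ] X) ≤ 1) : (periSpec T).Subsingleton := by
  obtain ⟨g, y, rfl⟩ := rank_le_one_rep h
  exact periSpec_subsingleton (spec1 y g)

lemma pow_idem_smulRight {f : X →L[ℂ] ℂ} {u : X} (hfu : f u = 1) :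
    ∀ n, 1 ≤ n → (f.smulRight u) ^ n = f.smulRight u := by
  intro n hn
  induction n with
  | zero => omega
  | succ m ih =>
    rcases Nat.eq_zero_or_pos m with hm | hm
    · subst hm; simp
    · rw [pow_succ, ih hm]
      ext v
      simp [ContinuousLinearMap.mul_apply, hfu, smul_smul]

lemma exists_nonzero_peri {T : X →L[ℂ] X} (r s : ℕ) (hrs : 1 ≤ r + s) (hT : T ≠ 0) :
    ∃ S : X →L[ℂ] X, LinearMap.rank (S : X →ₗ[ℂ] X) ≤ 1 ∧
      ∃ c : ℂ, c ≠ 0 ∧ c ∈ periSpec (S ^ r * T * S ^ s) := by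
  have : ∃ u, T u ≠ 0 := by
    by_contra hc; push_neg at hc; exact hT (by ext v; simp [hc])
  obtain ⟨u, hu⟩ := this
  have hu0 : u ≠ 0 := fun h => hu (by rw [h]; simp)
  -- find f with f u = 1 and f (T u) ≠ 0
  have hf : ∃ f : X →L[ℂ] ℂ, f u = 1 ∧ f (T u) ≠ 0 := by
    by_cases hdep : ∃ a : ℂ, T u = a • u
    · obtain ⟨a, ha⟩ := hdep
      have ha0 : a ≠ 0 := fun h => hu (by rw [ha, h, zero_smul])
      obtain ⟨f, hfv⟩ := exists_clm_of_li (n := 1) (v := ![u])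
        (LinearIndependent.of_subsingleton (v := ![u]) 0 (by simpa using hu0)) ![1]
      have hfu : f u = 1 := by simpa using hfv 0
      exact ⟨f, hfu, by rw [ha, map_smul, hfu]; simpa using ha0⟩
    · push_neg at hdep
      have hli : LinearIndependent ℂ ![u, T u] := by
        rw [linearIndependent_fin2]
        refine ⟨by simpa using hu, fun a ha => ?_⟩
        simp only [Matrix.cons_val_one, Matrix.head_cons, Matrix.cons_val_zero] at ha
        rcases eq_or_ne a 0 with h0 | h0
        · rw [h0, zero_smul] at ha; exact hu0 ha.symm
        · refine hdep a⁻¹ ?_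
          have h2 := congrArg (fun w => a⁻¹ • w) ha
          simpa [smul_smul, inv_mul_cancel₀ h0] using h2
      obtain ⟨f, hfv⟩ := exists_clm_of_li hli ![1, 1]
      have h0 := hfv 0; have h1 := hfv 1
      simp only [Matrix.cons_val_zero, Matrix.cons_val_one, Matrix.head_cons] at h0 h1
      exact ⟨f, h0, by rw [h1]; exact one_ne_zero⟩
  obtain ⟨f, hfu, hfTu⟩ := hf
  set S : X →L[ℂ] X := f.smulRight u with hS
  set c : ℂ := f (T u) with hc
  refine ⟨S, rank_smulRight_le_one f u, c, hfTu, ?_⟩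
  set P : X →L[ℂ] X := S ^ r * T * S ^ s with hP
  -- P has a representation g.smulRight y with g y = c and eigenvector w ≠ 0 with eigenvalue c
  have hrep : ∃ (g : X →L[ℂ] ℂ) (y : X), P = g.smulRight y ∧ g y = c ∧
      ∃ w, w ≠ 0 ∧ P w = c • w := by
    rcases Nat.eq_zero_or_pos r with hr | hr
    · have hs : 1 ≤ s := by omega
      have hPe : P = (f).smulRight (T u) := by
        rw [hP, hr, pow_zero, one_mul, pow_idem_smulRight hfu s hs]
        ext v
        simp [hS, ContinuousLinearMap.mul_apply]
      refine ⟨f, T u, hPe, rfl, T u, hu, ?_⟩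
      rw [hPe]; simp [hc]
    · rw [pow_idem_smulRight hfu r hr] at hP
      rcases Nat.eq_zero_or_pos s with hs | hs
      · have hPe : P = (f.comp T).smulRight u := by
          rw [hP, hs, pow_zero, mul_one]
          ext v
          simp [hS, ContinuousLinearMap.mul_apply]
        refine ⟨f.comp T, u, hPe, by simpa using hc.symm, u, hu0, ?_⟩
        rw [hPe]; simp [hc]
      · rw [pow_idem_smulRight hfu s hs] at hP
        have hPe : P = (c • f).smulRight u := by
          rw [hP]
          ext v
          simp [hS, ContinuousLinearMap.mul_apply, hfu, hc, smul_smul]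
          ring
        refine ⟨c • f, u, hPe, by simp [hfu], u, hu0, ?_⟩
        rw [hPe]; simp [hfu]
  obtain ⟨g, y, hPe, hgy, w, hw0, hww⟩ := hrep
  have hsub : spectrum ℂ P ⊆ {0, c} := by
    rw [hPe, ← hgy]; exact spec1 y g
  have hcmem : c ∈ spectrum ℂ P := eig_mem_spectrum hw0 hww
  exact mem_periSpec hsub (by rintro w' (rfl | rfl) <;> simp) hcmem

lemma li_pair {a b : X} (ha : a ≠ 0) (hb : b ∉ Submodule.span ℂ ({a} : Set X)) :
    LinearIndependent ℂ ![a, b] := by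
  rw [linearIndependent_fin2]
  simp only [Matrix.cons_val_one, Matrix.head_cons, Matrix.cons_val_zero]
  refine ⟨fun h => hb (by rw [h]; exact zero_mem _), fun c hc => ?_⟩
  have hc0 : c ≠ 0 := fun h => ha (by rw [← hc, h, zero_smul])
  apply hb
  rw [Submodule.mem_span_singleton]
  exact ⟨c⁻¹, by rw [← hc, smul_smul, inv_mul_cancel₀ hc0, one_smul]⟩

lemma li_triple {a b c : X} (hab : LinearIndependent ℂ ![a, b])
    (hc : c ∉ Submodule.span ℂ ({a, b} : Set X)) :
    LinearIndependent ℂ ![a, b, c] := by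
  have he : (![a, b, c]) = Fin.snoc ![a, b] c := by
    funext i; fin_cases i <;> rfl
  rw [he, linearIndependent_fin_snoc]
  refine ⟨hab, ?_⟩
  rwa [show Set.range ![a, b] = ({a, b} : Set X) by
    rw [Matrix.range_cons, Matrix.range_cons_empty, Set.singleton_union]]

lemma li_quad {a b c d : X} (habc : LinearIndependent ℂ ![a, b, c])
    (hd : d ∉ Submodule.span ℂ ({a, b, c} : Set X)) :
    LinearIndependent ℂ ![a, b, c, d] := by
  have he : (![a, b, c, d]) = Fin.snoc ![a, b, c] d := by
    funext i; fin_cases i <;> rfl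
  rw [he, linearIndependent_fin_snoc]
  refine ⟨habc, ?_⟩
  rwa [show Set.range ![a, b, c] = ({a, b, c} : Set X) by
    rw [Matrix.range_cons, Matrix.range_cons, Matrix.range_cons_empty,
      Set.singleton_union, Set.singleton_union]]

lemma mem_span_triple' {a b c x : X} (h : x ∈ Submodule.span ℂ ({a, b, c} : Set X)) :
    ∃ p q r : ℂ, x = p • a + q • b + r • c := by
  rw [Submodule.mem_span_insert] at h
  obtain ⟨p, z, hz, rfl⟩ := h
  rw [Submodule.mem_span_insert] at hz
  obtain ⟨q, w, hw, rfl⟩ := hz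
  rw [Submodule.mem_span_singleton] at hw
  obtain ⟨r, rfl⟩ := hw
  exact ⟨p, q, r, by module⟩

/-- The configuration needed to build the rank-two perturbation. -/
def Config (T : X →L[ℂ] X) : Prop :=
  ∃ (x₁ x₂ : X) (f₁ f₂ : X →L[ℂ] ℂ),
    f₁ x₁ = 1 ∧ f₁ x₂ = 0 ∧ f₂ x₁ = 0 ∧ f₂ x₂ = 1 ∧
    f₂ (T x₁) = 0 ∧ f₁ (T x₁) ≠ 0 ∧ f₂ (T x₂) ≠ 0

/-- Eigenvector case. -/
lemma config_of_eigen {T : X →L[ℂ] X} {x : X} (hx : x ≠ 0) {α : ℂ} (hα : α ≠ 0)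
    (hTx : T x = α • x)
    (h2 : ∃ u v : X, LinearIndependent ℂ ![T u, T v]) : Config T := by
  -- find x₂ outside span{x} with T x₂ outside span{x}
  have hx₂ : ∃ x₂, x₂ ∉ Submodule.span ℂ ({x} : Set X) ∧
      T x₂ ∉ Submodule.span ℂ ({x} : Set X) := by
    by_contra hcon
    push_neg at hcon
    have hall : ∀ v, T v ∈ Submodule.span ℂ ({x} : Set X) := by
      intro v
      by_cases hv : v ∈ Submodule.span ℂ ({x} : Set X)
      · obtain ⟨c, rfl⟩ := Submodule.mem_span_singleton.mp hv
        rw [map_smul, hTx, smul_smul]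
        exact Submodule.smul_mem _ _ (Submodule.mem_span_singleton_self x)
      · exact hcon v hv
    obtain ⟨u, v, hli⟩ := h2
    obtain ⟨a, ha⟩ := Submodule.mem_span_singleton.mp (hall u)
    obtain ⟨b, hb⟩ := Submodule.mem_span_singleton.mp (hall v)
    rw [linearIndependent_fin2] at hli
    obtain ⟨hne, hnd⟩ := hli
    simp only [Matrix.cons_val_one, Matrix.head_cons, Matrix.cons_val_zero] at hne hnd
    have hb0 : b ≠ 0 := fun h => hne (by rw [← hb, h, zero_smul])
    exact hnd (a / b) (by rw [← hb, ← ha, smul_smul, div_mul_cancel₀ _ hb0])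
  obtain ⟨x₂, hx₂s, hTx₂s⟩ := hx₂
  have hli2 : LinearIndependent ℂ ![x, x₂] := li_pair hx hx₂s
  by_cases hmem : T x₂ ∈ Submodule.span ℂ ({x, x₂} : Set X)
  · obtain ⟨p, q, hpq⟩ := Submodule.mem_span_pair.mp hmem
    have hq : q ≠ 0 := by
      intro h
      apply hTx₂s
      rw [← hpq, h, zero_smul, add_zero]
      exact Submodule.smul_mem _ _ (Submodule.mem_span_singleton_self x)
    obtain ⟨f₁, hf₁⟩ := exists_clm_of_li hli2 ![1, 0]
    obtain ⟨f₂, hf₂⟩ := exists_clm_of_li hli2 ![0, 1]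
    have e10 := hf₁ 0; have e11 := hf₁ 1; have e20 := hf₂ 0; have e21 := hf₂ 1
    simp only [Matrix.cons_val_zero, Matrix.cons_val_one, Matrix.head_cons] at e10 e11 e20 e21
    refine ⟨x, x₂, f₁, f₂, e10, e11, e20, e21, ?_, ?_, ?_⟩
    · rw [hTx, map_smul, e20, smul_zero]
    · rw [hTx, map_smul, e10]; simpa using hα
    · rw [← hpq]; simp [e10, e11, e20, e21, hq]
  · have hli3 : LinearIndependent ℂ ![x, x₂, T x₂] := li_triple hli2 hmem
    obtain ⟨f₁, hf₁⟩ := exists_clm_of_li hli3 ![1, 0, 0]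
    obtain ⟨f₂, hf₂⟩ := exists_clm_of_li hli3 ![0, 1, 1]
    have e10 := hf₁ 0; have e11 := hf₁ 1; have e20 := hf₂ 0; have e21 := hf₂ 1
    have e22 := hf₂ 2
    simp only [Matrix.cons_val_zero, Matrix.cons_val_one, Matrix.head_cons,
      Matrix.cons_val_two, Matrix.tail_cons] at e10 e11 e20 e21 e22
    refine ⟨x, x₂, f₁, f₂, e10, e11, e20, e21, ?_, ?_, ?_⟩
    · rw [hTx, map_smul, e20, smul_zero]
    · rw [hTx, map_smul, e10]; simpa using hα
    · rw [e22]; exact one_ne_zero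

lemma key_config {T : X →L[ℂ] X}
    (h2 : ∃ u v : X, LinearIndependent ℂ ![T u, T v]) : Config T := by
  by_cases hE : ∃ x, x ≠ 0 ∧ ∃ α : ℂ, α ≠ 0 ∧ T x = α • x
  · obtain ⟨x, hx, α, hα, hTx⟩ := hE
    exact config_of_eigen hx hα hTx h2
  · push_neg at hE
    -- pick x₁ with T x₁ ≠ 0
    obtain ⟨u, v, hliuv⟩ := h2
    have hTu : T u ≠ 0 := by
      have := hliuv.ne_zero 0
      simpa using this
    have hux : u ≠ 0 := fun h => hTu (by rw [h, map_zero])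
    set x₁ := u with hx₁
    clear_value x₁
    -- x₁, T x₁ independent
    have hli : LinearIndependent ℂ ![x₁, T x₁] := by
      rw [linearIndependent_fin2]
      simp only [Matrix.cons_val_one, Matrix.head_cons, Matrix.cons_val_zero]
      refine ⟨hTu, fun a ha => ?_⟩
      have ha0 : a ≠ 0 := fun h => hux (by rw [← ha, h, zero_smul])
      have : T x₁ = a⁻¹ • x₁ := by
        have h2' := congrArg (fun w => a⁻¹ • w) ha
        simpa [smul_smul, inv_mul_cancel₀ ha0] using h2'
      exact hE x₁ hux a⁻¹ (inv_ne_zero ha0) this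
    have hpairspan : ∀ w : X, w ∈ Submodule.span ℂ ({x₁, T x₁} : Set X) ↔
        ∃ p q : ℂ, p • x₁ + q • T x₁ = w := fun w => Submodule.mem_span_pair
    by_cases hR : ∃ w, w ∉ Submodule.span ℂ ({x₁, T x₁} : Set X) ∧
        T w ∉ Submodule.span ℂ ({x₁, T x₁} : Set X)
    · -- generic case
      obtain ⟨x₂, hx₂, hTx₂⟩ := hR
      have hli3 : LinearIndependent ℂ ![x₁, T x₁, x₂] := li_triple hli hx₂
      obtain ⟨f₁, hf₁⟩ := exists_clm_of_li hli3 ![1, 1, 0]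
      have e10 := hf₁ 0; have e1T := hf₁ 1; have e12 := hf₁ 2
      simp only [Matrix.cons_val_zero, Matrix.cons_val_one, Matrix.head_cons,
        Matrix.cons_val_two, Matrix.tail_cons] at e10 e1T e12
      by_cases hmem : T x₂ ∈ Submodule.span ℂ ({x₁, T x₁, x₂} : Set X)
      · obtain ⟨p, q, w, hpqw⟩ := mem_span_triple' hmem
        have hw : w ≠ 0 := by
          intro h
          apply hTx₂
          rw [hpqw, h, zero_smul, add_zero]
          exact Submodule.add_mem _
            (Submodule.smul_mem _ _ (Submodule.subset_span (by simp)))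
            (Submodule.smul_mem _ _ (Submodule.subset_span (by simp)))
        obtain ⟨f₂, hf₂⟩ := exists_clm_of_li hli3 ![0, 0, 1]
        have e20 := hf₂ 0; have e2T := hf₂ 1; have e22 := hf₂ 2
        simp only [Matrix.cons_val_zero, Matrix.cons_val_one, Matrix.head_cons,
          Matrix.cons_val_two, Matrix.tail_cons] at e20 e2T e22
        refine ⟨x₁, x₂, f₁, f₂, e10, e12, e20, e22, e2T, by rw [e1T]; exact one_ne_zero, ?_⟩
        rw [hpqw]
        simp [e20, e2T, e22, hw]
      · have hli4 : LinearIndependent ℂ ![x₁, T x₁, x₂, T x₂] := li_quad hli3 hmem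
        obtain ⟨f₂, hf₂⟩ := exists_clm_of_li hli4 ![0, 0, 1, 1]
        have e20 := hf₂ 0; have e2T := hf₂ 1; have e22 := hf₂ 2; have e23 := hf₂ 3
        simp only [Matrix.cons_val_zero, Matrix.cons_val_one, Matrix.head_cons,
          Matrix.cons_val_two, Matrix.tail_cons, Matrix.cons_val_three] at e20 e2T e22 e23
        refine ⟨x₁, x₂, f₁, f₂, e10, e12, e20, e22, e2T, by rw [e1T]; exact one_ne_zero, ?_⟩
        rw [e23]; exact one_ne_zero
    · -- range T ⊆ span {x₁, T x₁}
      push_neg at hR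
      have hrange : ∀ w, T w ∈ Submodule.span ℂ ({x₁, T x₁} : Set X) := by
        intro w
        by_cases hw : w ∈ Submodule.span ℂ ({x₁, T x₁} : Set X)
        · by_cases hex : ∃ u', u' ∉ Submodule.span ℂ ({x₁, T x₁} : Set X)
          · obtain ⟨u', hu'⟩ := hex
            have hwu : w + u' ∉ Submodule.span ℂ ({x₁, T x₁} : Set X) := by
              intro h
              exact hu' (by simpa using Submodule.sub_mem _ h hw)
            have h1 := hR (w + u') hwu
            have h2 := hR u' hu'
            have : T w = T (w + u') - T u' := by rw [map_add]; abel
            rw [this]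
            exact Submodule.sub_mem _ h1 h2
          · push_neg at hex
            exact hex (T w)
        · exact hR w hw
      -- T (T x₁) = a • x₁ + b • T x₁
      obtain ⟨a, b, hab⟩ := Submodule.mem_span_pair.mp (hrange (T x₁))
      -- a = 0
      have ha0 : a = 0 := by
        by_contra ha
        obtain ⟨sq, hsq⟩ := IsAlgClosed.exists_pow_nat_eq (b ^ 2 + 4 * a) (n := 2) (by norm_num)
        set z : ℂ := (b + sq) / 2 with hz
        have hroot : z ^ 2 = b * z + a := by
          rw [hz]; linear_combination (1/4 : ℂ) * hsq
        have hz0 : z ≠ 0 := by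
          intro h
          rw [h] at hroot
          simp at hroot
          exact ha hroot.symm
        set w : X := (a / z) • x₁ + T x₁ with hw
        have hw0 : w ≠ 0 := by
          intro h
          have : T x₁ = (-(a / z)) • x₁ := by
            rw [neg_smul]
            have := congrArg (fun y => y - (a / z) • x₁) h
            simpa [hw, add_sub_cancel_left] using this
          rw [linearIndependent_fin2] at hli
          obtain ⟨-, hnd⟩ := hli
          simp only [Matrix.cons_val_one, Matrix.head_cons, Matrix.cons_val_zero] at hnd
          have haz : -(a / z) ≠ 0 := by
            simp only [neg_ne_zero]
            exact div_ne_zero ha hz0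
          apply hnd (-(a / z))⁻¹
          rw [this, smul_smul, inv_mul_cancel₀ haz, one_smul]
        have hcoef : a / z + b = z := by
          field_simp
          linear_combination -hroot
        have hTw : T w = z • w := by
          have e1 : T w = a • x₁ + (a / z + b) • T x₁ := by
            rw [hw, map_add, map_smul, ← hab]; module
          have e2 : z • w = (z * (a / z)) • x₁ + z • T x₁ := by rw [hw]; module
          have e3 : z * (a / z) = a := by field_simp
          rw [e1, e2, hcoef, e3]
        exact hE w hw0 z hz0 hTw
      -- b = 0
      have hb0 : b = 0 := by
        by_contra hb
        have hbe : T (T x₁) = b • T x₁ := by rw [← hab, ha0, zero_smul, zero_add]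
        exact hE (T x₁) hTu b hb hbe
      have hTTx : T (T x₁) = 0 := by
        rw [← hab, ha0, hb0, zero_smul, zero_smul, add_zero]
      -- find v with T v having nonzero x₁-coefficient
      obtain ⟨c, d, hcd⟩ := Submodule.mem_span_pair.mp (hrange v)
      have hTv0 : T v ≠ 0 := by simpa using hliuv.ne_zero 1
      have hc0 : c ≠ 0 := by
        intro h
        rw [h, zero_smul, zero_add] at hcd
        have hd0 : d ≠ 0 := fun h' => hTv0 (by rw [← hcd, h', zero_smul])
        rw [linearIndependent_fin2] at hliuv
        obtain ⟨-, hnd⟩ := hliuv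
        simp only [Matrix.cons_val_one, Matrix.head_cons, Matrix.cons_val_zero] at hnd
        exact hnd d⁻¹ (by rw [← hcd, smul_smul, inv_mul_cancel₀ hd0, one_smul])
      set v' : X := c⁻¹ • v - (c⁻¹ * d) • x₁ with hv'def
      have hTv' : T v' = x₁ := by
        rw [hv'def, map_sub, map_smul, map_smul, ← hcd]
        match_scalars <;> field_simp <;> ring
      have hv's : v' ∉ Submodule.span ℂ ({x₁, T x₁} : Set X) := by
        intro h
        obtain ⟨p, q, hpq⟩ := Submodule.mem_span_pair.mp h
        have : x₁ = p • T x₁ := by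
          have := congrArg T hpq
          rw [map_add, map_smul, map_smul, hTTx, smul_zero, add_zero, hTv'] at this
          exact this.symm
        rw [linearIndependent_fin2] at hli
        obtain ⟨-, hnd⟩ := hli
        simp only [Matrix.cons_val_one, Matrix.head_cons, Matrix.cons_val_zero] at hnd
        exact hnd p this.symm
      have hli3 : LinearIndependent ℂ ![x₁, T x₁, v'] := li_triple hli hv's
      obtain ⟨f₁, hf₁⟩ := exists_clm_of_li hli3 ![1/2, 0, 1/2]
      obtain ⟨f₂, hf₂⟩ := exists_clm_of_li hli3 ![-(1/2), 1/2, 1/2]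
      have e10 := hf₁ 0; have e1T := hf₁ 1; have e1v := hf₁ 2
      have e20 := hf₂ 0; have e2T := hf₂ 1; have e2v := hf₂ 2
      simp only [Matrix.cons_val_zero, Matrix.cons_val_one, Matrix.head_cons,
        Matrix.cons_val_two, Matrix.tail_cons] at e10 e1T e1v e20 e2T e2v
      refine ⟨v' + x₁, v' - x₁, f₁, f₂, ?_, ?_, ?_, ?_, ?_, ?_, ?_⟩
      · rw [map_add, e1v, e10]; norm_num
      · rw [map_sub, e1v, e10]; norm_num
      · rw [map_add, e2v, e20]; norm_num
      · rw [map_sub, e2v, e20]; norm_num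
      · rw [map_add, map_add, hTv', e20, e2T]; norm_num
      · rw [map_add, map_add, hTv', e10, e1T]; norm_num
      · rw [map_sub, map_sub, hTv', e20, e2T]; norm_num

lemma exists_two_peri {T : X →L[ℂ] X} (r s : ℕ) (hrs : 1 ≤ r + s) (hcfg : Config T) :
    ∃ S : X →L[ℂ] X, LinearMap.rank (S : X →ₗ[ℂ] X) ≤ 2 ∧
      ∃ z w : ℂ, z ≠ w ∧ z ∈ periSpec (S ^ r * T * S ^ s) ∧
        w ∈ periSpec (S ^ r * T * S ^ s) := by
  obtain ⟨x₁, x₂, f₁, f₂, e11, e12, e21, e22, hT21, ha, hc⟩ := hcfg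
  set a : ℂ := f₁ (T x₁) with hadef
  set c : ℂ := f₂ (T x₂) with hcdef
  set k : ℕ := r + s with hk
  obtain ⟨μ, hμ⟩ := IsAlgClosed.exists_pow_nat_eq (-a / c) (n := k) (by omega)
  have hμk : μ ^ k = -a / c := hμ
  have hμkc : μ ^ k * c = -a := by rw [hμk]; field_simp
  set S : X →L[ℂ] X := f₁.smulRight x₁ + (μ • f₂).smulRight x₂ with hS
  have hSapp : ∀ v, S v = f₁ v • x₁ + (μ * f₂ v) • x₂ := by
    intro v; simp [hS]
  have hSx₁ : S x₁ = x₁ := by rw [hSapp]; rw [e11, e21]; simp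
  have hSx₂ : S x₂ = μ • x₂ := by rw [hSapp]; rw [e12, e22]; simp
  have hPow : ∀ n, 1 ≤ n → S ^ n = f₁.smulRight x₁ + ((μ ^ n) • f₂).smulRight x₂ := by
    intro n hn
    induction n with
    | zero => omega
    | succ m ih =>
      rcases Nat.eq_zero_or_pos m with hm | hm
      · subst hm; ext v; simp [hSapp v]
      · rw [pow_succ, ih hm]
        ext v
        have h1 : f₁ (S v) = f₁ v := by rw [hSapp]; simp [e11, e12]
        have h2 : f₂ (S v) = μ * f₂ v := by rw [hSapp]; simp [e21, e22]
        simp only [ContinuousLinearMap.mul_apply, ContinuousLinearMap.add_apply,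
          ContinuousLinearMap.smulRight_apply, ContinuousLinearMap.smul_apply,
          smul_eq_mul, h1, h2]
        rw [pow_succ]
        module
  have hPowx₁ : ∀ n : ℕ, (S ^ n) x₁ = x₁ := by
    intro n
    induction n with
    | zero => simp
    | succ m ih => rw [pow_succ, ContinuousLinearMap.mul_apply, hSx₁, ih]
  have hPowx₂ : ∀ n : ℕ, (S ^ n) x₂ = μ ^ n • x₂ := by
    intro n
    induction n with
    | zero => simp
    | succ m ih =>
      rw [pow_succ, ContinuousLinearMap.mul_apply, hSx₂, map_smul, ih, smul_smul, pow_succ]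
      ring_nf
  set Q : X →L[ℂ] X := S ^ r * T * S ^ s with hQdef
  -- unified representation
  have hrep : ∃ (y₁ y₂ : X) (g₁ g₂ : X →L[ℂ] ℂ),
      Q = g₁.smulRight y₁ + g₂.smulRight y₂ ∧ g₁ y₁ = a ∧ g₂ y₁ = 0 ∧ g₂ y₂ = -a := by
    rcases Nat.eq_zero_or_pos r with hr | hr
    · have hs : 1 ≤ s := by omega
      refine ⟨T x₁, T x₂, f₁, (μ ^ s) • f₂, ?_, rfl, ?_, ?_⟩
      · rw [hQdef, hr, pow_zero, one_mul, hPow s hs]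
        ext v
        simp only [ContinuousLinearMap.mul_apply, ContinuousLinearMap.add_apply,
          ContinuousLinearMap.smulRight_apply, ContinuousLinearMap.smul_apply,
          smul_eq_mul, map_add, map_smul]
      · simp [hT21]
      · have : (s : ℕ) = k := by omega
        simp only [ContinuousLinearMap.smul_apply, smul_eq_mul]
        rw [this, ← hcdef, hμkc]
    · refine ⟨x₁, x₂, (f₁.comp T).comp (S ^ s : X →L[ℂ] X),
        (μ ^ r) • ((f₂.comp T).comp (S ^ s : X →L[ℂ] X)), ?_, ?_, ?_, ?_⟩
      · rw [hQdef, hPow r hr]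
        ext v
        simp only [ContinuousLinearMap.mul_apply, ContinuousLinearMap.add_apply,
          ContinuousLinearMap.smulRight_apply, ContinuousLinearMap.smul_apply,
          ContinuousLinearMap.coe_comp', Function.comp_apply, smul_eq_mul]
      · simp [hPowx₁, hadef]
      · simp [hPowx₁, hT21]
      · simp only [ContinuousLinearMap.smul_apply, ContinuousLinearMap.coe_comp',
          Function.comp_apply, smul_eq_mul]
        rw [hPowx₂ s, map_smul, map_smul, smul_eq_mul, ← hcdef]
        rw [← mul_assoc, ← pow_add, ← hk, hμkc]
  obtain ⟨y₁, y₂, g₁, g₂, hQ, hg11, hg21, hg22⟩ := hrep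
  have ha' : a ≠ 0 := ha
  -- spectrum ⊆ {0, a, -a}
  have hsub : spectrum ℂ Q ⊆ {0, a, -a} := by
    intro z hz
    by_contra hne
    simp only [Set.mem_insert_iff, Set.mem_singleton_iff, not_or] at hne
    obtain ⟨hz0, hza, hzna⟩ := hne
    refine spec2 y₁ y₂ g₁ g₂ hz0 ?_ (by rw [← hQ]; exact hz)
    rw [hg11, hg21, hg22, mul_zero, sub_zero]
    exact mul_ne_zero (sub_ne_zero.mpr (fun h => hza (by linear_combination -h)))
      (sub_ne_zero.mpr (fun h => hzna (by linear_combination -h)))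
  -- eigenvalues a and -a
  have hy₁0 : y₁ ≠ 0 := fun h => ha' (by rw [← hg11, h, map_zero])
  have heig1 : Q y₁ = a • y₁ := by
    rw [hQ]
    simp [hg11, hg21]
  have hamem : a ∈ spectrum ℂ Q := eig_mem_spectrum hy₁0 heig1
  set w : X := g₁ y₂ • y₁ - (2 * a) • y₂ with hwdef
  have hw0 : w ≠ 0 := by
    intro h
    have : g₂ w = 0 := by rw [h, map_zero]
    rw [hwdef, map_sub, map_smul, map_smul, hg21, hg22] at this
    simp only [smul_eq_mul, mul_zero, zero_sub, neg_eq_zero, mul_neg, neg_neg] at this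
    exact ha' (by
      have h2 : (2 : ℂ) * (a * a) = 0 := by linear_combination this
      rcases mul_eq_zero.mp h2 with h3 | h3
      · norm_num at h3
      · rcases mul_eq_zero.mp h3 with h4 | h4 <;> exact h4)
  have heig2 : Q w = (-a) • w := by
    rw [hQ]
    have hg₁w : g₁ w = -a * g₁ y₂ := by
      rw [hwdef, map_sub, map_smul, map_smul, hg11]
      simp only [smul_eq_mul]
      ring
    have hg₂w : g₂ w = 2 * a * a := by
      rw [hwdef, map_sub, map_smul, map_smul, hg21, hg22]
      simp only [smul_eq_mul]
      ring
    simp only [ContinuousLinearMap.add_apply, ContinuousLinearMap.smulRight_apply,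
      hg₁w, hg₂w]
    rw [hwdef]
    module
  have hnamem : (-a) ∈ spectrum ℂ Q := eig_mem_spectrum hw0 heig2
  have hbd : ∀ w' ∈ ({0, a, -a} : Set ℂ), ‖w'‖₊ ≤ ‖a‖₊ := by
    rintro w' (rfl | rfl | rfl) <;> simp
  refine ⟨S, ?_, a, -a, ?_, mem_periSpec hsub hbd hamem, ?_⟩
  · rw [hS]; exact rank_sum_smulRight_le_two _ _ _ _
  · intro h
    exact ha' (by linear_combination h / 2)
  · have hbd' : ∀ w' ∈ ({0, a, -a} : Set ℂ), ‖w'‖₊ ≤ ‖-a‖₊ := by simpa using hbd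
    exact mem_periSpec hsub hbd' hnamem

lemma rank_le_one_of_no_indep {T : X →L[ℂ] X}
    (h : ∀ u v : X, ¬ LinearIndependent ℂ ![T u, T v]) :
    LinearMap.rank (T : X →ₗ[ℂ] X) ≤ 1 := by
  by_cases hT : T = 0
  · subst hT
    have := rank_le_of_range_le_span (T := (0 : X →L[ℂ] X)) (s := (∅ : Set X))
      (fun v => by simp)
    simpa using this.trans (by simp)
  · have : ∃ u, T u ≠ 0 := by
      by_contra hc; push_neg at hc; exact hT (by ext v; simp [hc])
    obtain ⟨u, hu⟩ := this
    have hspan : ∀ v, T v ∈ Submodule.span ℂ ({T u} : Set X) := by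
      intro v
      by_contra hv
      exact h u v (li_pair hu hv)
    have := rank_le_of_range_le_span hspan
    simpa using this

lemma ne_zero_of_rank_eq_one {T : X →L[ℂ] X}
    (h : LinearMap.rank (T : X →ₗ[ℂ] X) = 1) : T ≠ 0 := by
  intro h0
  rw [h0] at h
  have : LinearMap.rank ((0 : X →L[ℂ] X) : X →ₗ[ℂ] X) = 0 := by
    simp [LinearMap.rank]
  rw [this] at h
  exact zero_ne_one h

lemma rank_eq_one_of_le_one_ne_zero {T : X →L[ℂ] X} (hT : T ≠ 0)
    (h : LinearMap.rank (T : X →ₗ[ℂ] X) ≤ 1) : LinearMap.rank (T : X →ₗ[ℂ] X) = 1 := by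
  refine le_antisymm h ?_
  rw [Cardinal.one_le_iff_ne_zero]
  intro h0
  apply hT
  have hr : LinearMap.range (T : X →ₗ[ℂ] X) = ⊥ := by
    rw [LinearMap.rank] at h0
    exact Submodule.rank_eq_zero.mp h0
  ext v
  have : T v ∈ LinearMap.range (T : X →ₗ[ℂ] X) := ⟨v, rfl⟩
  rw [hr] at this
  simpa using this


end Aux

/-- Claim 2 in the proof of Theorem 2.2: if `Φ` is a map between standard operator algebras
on complex Banach spaces of dimension at least two whose range contains all operators of
rank at most two and which preserves the peripheral spectrum of the products `B^r A B^s`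
(`r + s ≥ 1`), then `Φ` preserves rank-one operators in both directions. -/
theorem periSpec_sandwich_preserver_rankOne {X₁ X₂ : Type*}
    [NormedAddCommGroup X₁] [NormedSpace ℂ X₁] [CompleteSpace X₁]
    [NormedAddCommGroup X₂] [NormedSpace ℂ X₂] [CompleteSpace X₂]
    (hdim₁ : 2 ≤ Module.rank ℂ X₁) (hdim₂ : 2 ≤ Module.rank ℂ X₂)
    (A₁ : NonUnitalSubalgebra ℂ (X₁ →L[ℂ] X₁))
    (A₂ : NonUnitalSubalgebra ℂ (X₂ →L[ℂ] X₂))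
    (hA₁ : ∀ T : X₁ →L[ℂ] X₁, LinearMap.rank (T : X₁ →ₗ[ℂ] X₁) < Cardinal.aleph0 → T ∈ A₁)
    (hA₂ : ∀ T : X₂ →L[ℂ] X₂, LinearMap.rank (T : X₂ →ₗ[ℂ] X₂) < Cardinal.aleph0 → T ∈ A₂)
    (r s : ℕ) (hrs : 1 ≤ r + s)
    (Φ : A₁ → A₂)
    (hrange : ∀ T : X₂ →L[ℂ] X₂, LinearMap.rank (T : X₂ →ₗ[ℂ] X₂) ≤ 2 →
      ∃ A : A₁, (Φ A : X₂ →L[ℂ] X₂) = T)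
    (hpres : ∀ A B : A₁,
      periSpec ((B : X₁ →L[ℂ] X₁) ^ r * (A : X₁ →L[ℂ] X₁) * (B : X₁ →L[ℂ] X₁) ^ s)
        = periSpec ((Φ B : X₂ →L[ℂ] X₂) ^ r * (Φ A : X₂ →L[ℂ] X₂)
            * (Φ B : X₂ →L[ℂ] X₂) ^ s)) :
    ∀ A : A₁, LinearMap.rank ((A : X₁ →L[ℂ] X₁) : X₁ →ₗ[ℂ] X₁) = 1
      ↔ LinearMap.rank ((Φ A : X₂ →L[ℂ] X₂) : X₂ →ₗ[ℂ] X₂) = 1 := by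
  intro A
  constructor
  · intro hA
    -- (*) peripheral spectra of sandwiches of Φ A by rank ≤ 2 operators are subsingletons
    have hsub2 : ∀ S : X₂ →L[ℂ] X₂, LinearMap.rank (S : X₂ →ₗ[ℂ] X₂) ≤ 2 →
        (periSpec (S ^ r * (Φ A : X₂ →L[ℂ] X₂) * S ^ s)).Subsingleton := by
      intro S hS
      obtain ⟨B, hB⟩ := hrange S hS
      have h1 : LinearMap.rank (((B : X₁ →L[ℂ] X₁) ^ r * (A : X₁ →L[ℂ] X₁)
          * (B : X₁ →L[ℂ] X₁) ^ s : X₁ →L[ℂ] X₁) : X₁ →ₗ[ℂ] X₁) ≤ 1 :=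
        (rank_sandwich_le _ _ r s).trans (le_of_eq hA)
      have h2 := periSpec_subsingleton_of_rank_le_one h1
      rw [hpres A B, hB] at h2
      exact h2
    -- Φ A ≠ 0
    have hA0 : (A : X₁ →L[ℂ] X₁) ≠ 0 := ne_zero_of_rank_eq_one hA
    have hΦA0 : (Φ A : X₂ →L[ℂ] X₂) ≠ 0 := by
      obtain ⟨S₁, hS₁rank, c, hc0, hcmem⟩ := exists_nonzero_peri r s hrs hA0
      have hS₁mem : S₁ ∈ A₁ := hA₁ S₁ (lt_of_le_of_lt hS₁rank Cardinal.one_lt_aleph0)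
      set B : A₁ := ⟨S₁, hS₁mem⟩ with hB
      have hcoe : ((B : X₁ →L[ℂ] X₁)) = S₁ := rfl
      have hmem2 : c ∈ periSpec ((Φ B : X₂ →L[ℂ] X₂) ^ r * (Φ A : X₂ →L[ℂ] X₂)
          * (Φ B : X₂ →L[ℂ] X₂) ^ s) := by
        rw [← hpres A B, hcoe]
        exact hcmem
      intro h0
      rw [h0, mul_zero, zero_mul] at hmem2
      exact hc0 (spec_zero hmem2.1)
    -- rank ≤ 1
    have hle : LinearMap.rank ((Φ A : X₂ →L[ℂ] X₂) : X₂ →ₗ[ℂ] X₂) ≤ 1 := by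
      apply rank_le_one_of_no_indep
      intro u v hli
      obtain ⟨S, hSrank, z, w, hzw, hz, hw⟩ :=
        exists_two_peri r s hrs (key_config ⟨u, v, hli⟩)
      exact hzw (hsub2 S hSrank hz hw)
    exact rank_eq_one_of_le_one_ne_zero hΦA0 hle
  · intro hA
    have hsub1 : ∀ S : X₁ →L[ℂ] X₁, LinearMap.rank (S : X₁ →ₗ[ℂ] X₁) ≤ 2 →
        (periSpec (S ^ r * (A : X₁ →L[ℂ] X₁) * S ^ s)).Subsingleton := by
      intro S hS
      have hSmem : S ∈ A₁ := hA₁ S (lt_of_le_of_lt hS (by exact_mod_cast Cardinal.nat_lt_aleph0 2))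
      set B : A₁ := ⟨S, hSmem⟩ with hBdef
      have h1 : LinearMap.rank (((Φ B : X₂ →L[ℂ] X₂) ^ r * (Φ A : X₂ →L[ℂ] X₂)
          * (Φ B : X₂ →L[ℂ] X₂) ^ s : X₂ →L[ℂ] X₂) : X₂ →ₗ[ℂ] X₂) ≤ 1 :=
        (rank_sandwich_le _ _ r s).trans (le_of_eq hA)
      have h2 := periSpec_subsingleton_of_rank_le_one h1
      rw [← hpres A B] at h2
      exact h2
    have hΦA0 : (Φ A : X₂ →L[ℂ] X₂) ≠ 0 := ne_zero_of_rank_eq_one hA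
    have hA0 : (A : X₁ →L[ℂ] X₁) ≠ 0 := by
      obtain ⟨S₂, hS₂rank, c, hc0, hcmem⟩ := exists_nonzero_peri r s hrs hΦA0
      obtain ⟨B, hB⟩ := hrange S₂ (hS₂rank.trans (by norm_num))
      have hmem2 : c ∈ periSpec ((B : X₁ →L[ℂ] X₁) ^ r * (A : X₁ →L[ℂ] X₁)
          * (B : X₁ →L[ℂ] X₁) ^ s) := by
        rw [hpres A B, hB]
        exact hcmem
      intro h0
      rw [h0, mul_zero, zero_mul] at hmem2
      exact hc0 (spec_zero hmem2.1)
    have hle : LinearMap.rank ((A : X₁ →L[ℂ] X₁) : X₁ →ₗ[ℂ] X₁) ≤ 1 := by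
      apply rank_le_one_of_no_indep
      intro u v hli
      obtain ⟨S, hSrank, z, w, hzw, hz, hw⟩ :=
        exists_two_peri r s hrs (key_config ⟨u, v, hli⟩)
      exact hzw (hsub1 S hSrank hz hw)
    exact rank_eq_one_of_le_one_ne_zero hA0 hle
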